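/- Set C7 := J2 / (2H·(2H−1)), which is strictly positive. Then there exists a real constant C6 such that for all integers s > t > T0 one has C(s,t) ≤ C6 + C7·( s^{2H} − (s−t)^{2H} − ( (t+1)^{2H} − 1 ) ). -/

import Mathlib

open Finset MeasureTheory ProbabilityTheory

/-- `Cst r s t` is the covariance `cov(S_s - S_t, S_t)` of the partial-sum process
of a centered stationary sequence with covariance function `r`. -/
noncomputable def Cst (r : ℤ → ℝ) (s t : ℕ) : ℝ :=
  ∑ i ∈ Finset.Icc (t + 1) s, ∑ j ∈ Finset.Icc 1 t, r ((i : ℤ) - (j : ℤ))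

/-- Telescoping sum over an `Icc`. -/
private lemma tele (f : ℕ → ℝ) : ∀ b a : ℕ, a ≤ b + 1 →
    ∑ k ∈ Finset.Icc a b, (f (k + 1) - f k) = f (b + 1) - f a := by
  intro b
  induction b with
  | zero =>
    intro a ha
    interval_cases a <;> simp
  | succ n ih =>
    intro a ha
    rcases Nat.lt_or_ge a (n + 2) with hlt | hge
    · rw [Finset.sum_Icc_succ_top (by omega), ih a (by omega)]
      ring
    · have : a = n + 2 := by omega
      subst this
      simp

private lemma reindex1 (f : ℕ → ℝ) (t i : ℕ) (h : t + 1 ≤ i) :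
    ∑ j ∈ Finset.Icc 1 t, f (i - j) = ∑ k ∈ Finset.Icc (i - t) (i - 1), f k := by
  refine Finset.sum_nbij' (fun j => i - j) (fun k => i - k) ?_ ?_ ?_ ?_ ?_
  · intro a ha; simp only [Finset.mem_Icc] at *; omega
  · intro a ha; simp only [Finset.mem_Icc] at *; omega
  · intro a ha; simp only [Finset.mem_Icc] at *; omega
  · intro a ha; simp only [Finset.mem_Icc] at *; omega
  · intro a _; rfl

private lemma reindex2 (f : ℕ → ℝ) (t s : ℕ) :
    ∑ i ∈ Finset.Icc (t + 1) s, f (i - t) = ∑ k ∈ Finset.Icc 1 (s - t), f k := by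
  refine Finset.sum_nbij' (fun i => i - t) (fun k => k + t) ?_ ?_ ?_ ?_ ?_
  · intro a ha; simp only [Finset.mem_Icc] at *; omega
  · intro a ha; simp only [Finset.mem_Icc] at *; omega
  · intro a ha; simp only [Finset.mem_Icc] at *; omega
  · intro a ha; simp only [Finset.mem_Icc] at *; omega
  · intro a _; rfl

private lemma hasDeriv_g (p : ℝ) (x : ℝ) (hx : 0 < x) :
    HasDerivAt (fun y : ℝ => (y + 1) ^ p - y ^ p)
      (p * (x + 1) ^ (p - 1) - p * x ^ (p - 1)) x := by
  have h1 : HasDerivAt (fun y : ℝ => (y + 1) ^ p) (1 * p * (x + 1) ^ (p - 1)) x := by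
    refine HasDerivAt.rpow_const ((hasDerivAt_id x).add_const 1) (Or.inl ?_)
    show x + 1 ≠ 0
    positivity
  have h2 : HasDerivAt (fun y : ℝ => y ^ p) (p * x ^ (p - 1)) x :=
    Real.hasDerivAt_rpow_const (Or.inl hx.ne')
  have := h1.sub h2
  rw [one_mul] at this
  exact this

private lemma keyMVT (p : ℝ) (hp0 : 0 < p) (hp1 : p < 1) (k : ℝ) (hk : 1 ≤ k) :
    ((k + 2) ^ p - 2 * (k + 1) ^ p + k ^ p) / (p * (p - 1)) ≤ k ^ (p - 2) := by
  have hkpos : (0 : ℝ) < k := by linarith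
  -- first MVT
  obtain ⟨ξ, hξmem, hξeq⟩ := exists_hasDerivAt_eq_slope
    (fun y : ℝ => (y + 1) ^ p - y ^ p)
    (fun x : ℝ => p * (x + 1) ^ (p - 1) - p * x ^ (p - 1))
    (by linarith : k < k + 1)
    (fun x hx => by
      have hx0 : 0 < x := by
        rcases hx with ⟨h1, _⟩; linarith
      exact (hasDeriv_g p x hx0).continuousAt.continuousWithinAt)
    (fun x hx => hasDeriv_g p x (by rcases hx with ⟨h1, _⟩; linarith))
  obtain ⟨hξ1, hξ2⟩ := hξmem
  have hξpos : 0 < ξ := by linarith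
  -- second MVT
  obtain ⟨η, hηmem, hηeq⟩ := exists_hasDerivAt_eq_slope
    (fun y : ℝ => y ^ (p - 1))
    (fun x : ℝ => (p - 1) * x ^ (p - 2))
    (by linarith : ξ < ξ + 1)
    (fun x hx => by
      have hx0 : 0 < x := by rcases hx with ⟨h1, _⟩; linarith
      exact (Real.hasDerivAt_rpow_const (p := p - 1)
        (Or.inl hx0.ne')).continuousAt.continuousWithinAt)
    (fun x hx => by
      have hx0 : 0 < x := by rcases hx with ⟨h1, _⟩; linarith
      have hd := Real.hasDerivAt_rpow_const (x := x) (p := p - 1) (Or.inl hx0.ne')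
      have h12 : p - 1 - 1 = p - 2 := by ring
      rw [h12] at hd
      exact hd)
  obtain ⟨hη1, hη2⟩ := hηmem
  have hηk : k < η := by linarith
  have hηpos : 0 < η := by linarith
  -- simplify the two slope identities
  have e1 : p * (ξ + 1) ^ (p - 1) - p * ξ ^ (p - 1)
      = (k + 2) ^ p - 2 * (k + 1) ^ p + k ^ p := by
    rw [hξeq]
    have : k + 1 - k = (1 : ℝ) := by ring
    rw [this, div_one]
    have h2 : k + 1 + 1 = k + 2 := by ring
    rw [h2]
    ring
  have e2 : (p - 1) * η ^ (p - 2) = (ξ + 1) ^ (p - 1) - ξ ^ (p - 1) := by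
    rw [hηeq]
    have : ξ + 1 - ξ = (1 : ℝ) := by ring
    rw [this, div_one]
  have hN : (k + 2) ^ p - 2 * (k + 1) ^ p + k ^ p = p * (p - 1) * η ^ (p - 2) := by
    rw [← e1, ← mul_sub, ← e2]
    ring
  have hpm : p * (p - 1) ≠ 0 := by
    have : p - 1 < 0 := by linarith
    exact (mul_neg_of_pos_of_neg hp0 this).ne
  rw [hN, mul_div_cancel_left₀ _ hpm]
  exact Real.rpow_le_rpow_of_nonpos hkpos hηk.le (by linarith)

private lemma keyAnti (p : ℝ) (hp0 : 0 < p) (hp1 : p < 1) :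
    AntitoneOn (fun y : ℝ => (y + 1) ^ p - y ^ p) (Set.Ici (1 : ℝ)) := by
  have hint : interior (Set.Ici (1 : ℝ)) = Set.Ioi 1 := interior_Ici
  refine antitoneOn_of_deriv_nonpos (convex_Ici 1) ?_ ?_ ?_
  · intro x hx
    have hx0 : 0 < x := lt_of_lt_of_le one_pos hx
    exact (hasDeriv_g p x hx0).continuousAt.continuousWithinAt
  · rw [hint]
    intro x hx
    have hx0 : 0 < x := lt_trans one_pos hx
    exact (hasDeriv_g p x hx0).differentiableAt.differentiableWithinAt
  · rw [hint]
    intro x hx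
    have hx0 : 0 < x := lt_trans one_pos hx
    rw [(hasDeriv_g p x hx0).deriv]
    have h1 : (x + 1) ^ (p - 1) ≤ x ^ (p - 1) :=
      Real.rpow_le_rpow_of_nonpos hx0 (by linarith) (by linarith)
    nlinarith

private noncomputable def Gf (p : ℝ) (m : ℕ) : ℝ := (m : ℝ) ^ p / (p * (p - 1))

private noncomputable def gf (p : ℝ) (m : ℕ) : ℝ := Gf p (m + 1) - Gf p m

theorem covariance_key_estimate
    (r : ℤ → ℝ) (hEven : ∀ t : ℤ, r (-t) = r t)
    (hAbsSum : Summable fun t : ℤ => |r t|)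
    (hSumZero : ∑' t : ℤ, r t = 0)
    (T0 : ℕ) (hT0 : 2 ≤ T0)
    (J1 J2 χ : ℝ) (hJ12 : J1 ≤ J2) (hJ2 : J2 < 0)
    (hχ : χ ∈ Set.Ioo (-2 : ℝ) (-1))
    (hbound : ∀ t : ℤ, (T0 : ℤ) ≤ t →
      J1 * (t : ℝ) ^ χ ≤ r t ∧ r t ≤ J2 * (t : ℝ) ^ χ)
    (H : ℝ) (hH : H = χ / 2 + 1) :
    0 < J2 / (2 * H * (2 * H - 1)) ∧
    ∃ C6 : ℝ, ∀ s t : ℕ, T0 < t → t < s →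
      Cst r s t ≤ C6 + (J2 / (2 * H * (2 * H - 1))) *
        ((s : ℝ) ^ (2 * H) - ((s : ℝ) - (t : ℝ)) ^ (2 * H)
          - (((t : ℝ) + 1) ^ (2 * H) - 1)) := by
  obtain ⟨hχ1, hχ2⟩ := hχ
  set p : ℝ := 2 * H with hpdef
  have hp : p = χ + 2 := by rw [hpdef, hH]; ring
  have hp0 : 0 < p := by rw [hp]; linarith
  have hp1 : p < 1 := by rw [hp]; linarith
  have hpm : p * (p - 1) < 0 := mul_neg_of_pos_of_neg hp0 (by linarith)
  have hpne : p * (p - 1) ≠ 0 := hpm.ne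
  have hppred : p * (p - 1) = 2 * H * (2 * H - 1) := by rw [hpdef]
  have hC7 : 0 < J2 / (p * (p - 1)) := div_pos_of_neg_of_neg hJ2 hpm
  have hχp : χ = p - 2 := by rw [hp]; ring
  -- key pointwise facts
  have hkey : ∀ k : ℕ, 1 ≤ k → gf p (k + 1) - gf p k ≤ (k : ℝ) ^ χ := by
    intro k hk
    have h1 : gf p (k + 1) - gf p k
        = (((k : ℝ) + 2) ^ p - 2 * ((k : ℝ) + 1) ^ p + (k : ℝ) ^ p) / (p * (p - 1)) := by
      simp only [gf, Gf]
      push_cast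
      ring
    rw [h1, hχp]
    exact keyMVT p hp0 hp1 (k : ℝ) (by exact_mod_cast hk)
  have hgmono : ∀ a b : ℕ, 1 ≤ a → a ≤ b → gf p a ≤ gf p b := by
    intro a b ha hab
    have haR : (1 : ℝ) ≤ (a : ℝ) := by exact_mod_cast ha
    have habR : (a : ℝ) ≤ (b : ℝ) := by exact_mod_cast hab
    have h1 : ((b : ℝ) + 1) ^ p - (b : ℝ) ^ p ≤ ((a : ℝ) + 1) ^ p - (a : ℝ) ^ p := by
      have := keyAnti p hp0 hp1 (Set.mem_Ici.mpr haR)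
        (Set.mem_Ici.mpr (le_trans haR habR)) habR
      simpa using this
    have h2 : ∀ m : ℕ, gf p m = (((m : ℝ) + 1) ^ p - (m : ℝ) ^ p) / (p * (p - 1)) := by
      intro m; simp only [gf, Gf]; push_cast; ring
    rw [h2, h2, div_eq_mul_inv, div_eq_mul_inv]
    exact mul_le_mul_of_nonpos_right h1 (inv_nonpos.mpr hpm.le)
  -- the small-lag correction function
  set hf : ℕ → ℝ := fun k => if k < T0 then |r k| + |J2| else 0 with hfdef
  have hf_nonneg : ∀ k : ℕ, 0 ≤ hf k := by
    intro k
    simp only [hfdef]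
    split
    · positivity
    · exact le_rfl
  have hf_zero : ∀ k : ℕ, T0 ≤ k → hf k = 0 := by
    intro k hk; simp only [hfdef, if_neg (by omega : ¬ k < T0)]
  have hrpt : ∀ k : ℕ, 1 ≤ k → r (k : ℤ) ≤ hf k + J2 * (k : ℝ) ^ χ := by
    intro k hk
    by_cases hkT : k < T0
    · have h1 : (k : ℝ) ^ χ ≤ 1 :=
        Real.rpow_le_one_of_one_le_of_nonpos (by exact_mod_cast hk) (by linarith)
      have h2 : J2 ≤ J2 * (k : ℝ) ^ χ := by nlinarith
      have h3 : r (k : ℤ) ≤ |r (k : ℤ)| := le_abs_self _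
      have h4 : |J2| = -J2 := abs_of_neg hJ2
      simp only [hfdef, if_pos hkT]
      linarith
    · have hbk := (hbound (k : ℤ) (by exact_mod_cast (by omega : T0 ≤ k))).2
      have hcast : ((k : ℤ) : ℝ) = (k : ℝ) := by push_cast; rfl
      rw [hcast] at hbk
      simp only [hfdef, if_neg hkT, zero_add]
      exact hbk
  refine ⟨by rw [← hppred]; exact hC7, ?_⟩
  set Msum : ℝ := ∑ k ∈ Finset.range T0, (|r (k : ℤ)| + |J2|) with hMdef
  have hM0 : 0 ≤ Msum := Finset.sum_nonneg fun k _ => by positivity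
  refine ⟨(T0 : ℝ) * Msum, ?_⟩
  intro s t htT hts
  have hts' : t + 1 ≤ s := hts
  have ht1 : 1 ≤ t := by omega
  -- Step A: rewrite Cst with natural subtraction
  have stepA : Cst r s t
      = ∑ i ∈ Finset.Icc (t + 1) s, ∑ j ∈ Finset.Icc 1 t, r (((i - j : ℕ) : ℤ)) := by
    refine Finset.sum_congr rfl fun i hi => Finset.sum_congr rfl fun j hj => ?_
    simp only [Finset.mem_Icc] at hi hj
    congr 1
    omega
  -- Step B: pointwise bound
  have stepB : ∑ i ∈ Finset.Icc (t + 1) s, ∑ j ∈ Finset.Icc 1 t, r (((i - j : ℕ) : ℤ))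
      ≤ ∑ i ∈ Finset.Icc (t + 1) s, ∑ j ∈ Finset.Icc 1 t,
          (hf (i - j) + J2 * ((i - j : ℕ) : ℝ) ^ χ) := by
    refine Finset.sum_le_sum fun i hi => Finset.sum_le_sum fun j hj => ?_
    simp only [Finset.mem_Icc] at hi hj
    exact hrpt (i - j) (by omega)
  -- split the double sum
  have stepC : ∑ i ∈ Finset.Icc (t + 1) s, ∑ j ∈ Finset.Icc 1 t,
        (hf (i - j) + J2 * ((i - j : ℕ) : ℝ) ^ χ)
      = (∑ i ∈ Finset.Icc (t + 1) s, ∑ j ∈ Finset.Icc 1 t, hf (i - j))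
        + J2 * ∑ i ∈ Finset.Icc (t + 1) s, ∑ j ∈ Finset.Icc 1 t,
            ((i - j : ℕ) : ℝ) ^ χ := by
    rw [Finset.mul_sum, ← Finset.sum_add_distrib]
    refine Finset.sum_congr rfl fun i hi => ?_
    rw [Finset.mul_sum, ← Finset.sum_add_distrib]
  -- Step D : bound on the correction double sum
  have stepD : ∑ i ∈ Finset.Icc (t + 1) s, ∑ j ∈ Finset.Icc 1 t, hf (i - j)
      ≤ (T0 : ℝ) * Msum := by
    have hinner : ∀ i ∈ Finset.Icc (t + 1) s,
        ∑ j ∈ Finset.Icc 1 t, hf (i - j) ≤ if i < t + T0 then Msum else 0 := by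
      intro i hi
      simp only [Finset.mem_Icc] at hi
      rw [reindex1 hf t i hi.1]
      by_cases hiT : i < t + T0
      · rw [if_pos hiT]
        calc ∑ k ∈ Finset.Icc (i - t) (i - 1), hf k
            ≤ ∑ k ∈ Finset.Icc (i - t) (i - 1) ∪ Finset.range T0, hf k :=
              Finset.sum_le_sum_of_subset_of_nonneg Finset.subset_union_left
                (fun k _ _ => hf_nonneg k)
          _ = ∑ k ∈ Finset.range T0, hf k := by
              refine (Finset.sum_subset Finset.subset_union_right ?_).symm
              intro x hx hnx
              exact hf_zero x (by simpa using hnx)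
          _ ≤ Msum := by
              refine Finset.sum_le_sum fun k _ => ?_
              simp only [hfdef]
              split
              · exact le_rfl
              · positivity
      · rw [if_neg hiT]
        refine le_of_eq (Finset.sum_eq_zero fun k hk => ?_)
        simp only [Finset.mem_Icc] at hk
        exact hf_zero k (by omega)
    calc ∑ i ∈ Finset.Icc (t + 1) s, ∑ j ∈ Finset.Icc 1 t, hf (i - j)
        ≤ ∑ i ∈ Finset.Icc (t + 1) s, (if i < t + T0 then Msum else 0) :=
          Finset.sum_le_sum hinner
      _ = ∑ i ∈ (Finset.Icc (t + 1) s).filter (fun i => i < t + T0), Msum := by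
          rw [Finset.sum_filter]
      _ = ((Finset.Icc (t + 1) s).filter (fun i => i < t + T0)).card * Msum := by
          rw [Finset.sum_const, nsmul_eq_mul]
      _ ≤ (T0 : ℝ) * Msum := by
          refine mul_le_mul_of_nonneg_right ?_ hM0
          have hsub : (Finset.Icc (t + 1) s).filter (fun i => i < t + T0)
              ⊆ Finset.Icc (t + 1) (t + T0 - 1) := by
            intro x hx
            simp only [Finset.mem_filter, Finset.mem_Icc] at hx ⊢
            omega
          have hcard := Finset.card_le_card hsub
          have : (Finset.Icc (t + 1) (t + T0 - 1)).card = T0 - 1 := by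
            rw [Nat.card_Icc]; omega
          have hle : ((Finset.Icc (t + 1) s).filter (fun i => i < t + T0)).card ≤ T0 := by
            omega
          exact_mod_cast hle
  -- Step E : lower bound on the main double sum
  have stepE : Gf p (s + 1) - Gf p (t + 1) - (Gf p (s - t + 1) - Gf p 1)
      ≤ ∑ i ∈ Finset.Icc (t + 1) s, ∑ j ∈ Finset.Icc 1 t, ((i - j : ℕ) : ℝ) ^ χ := by
    have hinner : ∀ i ∈ Finset.Icc (t + 1) s,
        gf p i - gf p (i - t) ≤ ∑ j ∈ Finset.Icc 1 t, ((i - j : ℕ) : ℝ) ^ χ := by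
      intro i hi
      simp only [Finset.mem_Icc] at hi
      have h1 : ∑ j ∈ Finset.Icc 1 t, (gf p ((i - j) + 1) - gf p (i - j))
          ≤ ∑ j ∈ Finset.Icc 1 t, ((i - j : ℕ) : ℝ) ^ χ := by
        refine Finset.sum_le_sum fun j hj => ?_
        simp only [Finset.mem_Icc] at hj
        exact hkey (i - j) (by omega)
      refine le_trans (le_of_eq ?_) h1
      rw [reindex1 (fun k => gf p (k + 1) - gf p k) t i hi.1,
        tele (gf p) (i - 1) (i - t) (by omega)]
      have : i - 1 + 1 = i := by omega
      rw [this]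
    have houter : ∑ i ∈ Finset.Icc (t + 1) s, (gf p i - gf p (i - t))
        = Gf p (s + 1) - Gf p (t + 1) - (Gf p (s - t + 1) - Gf p 1) := by
      rw [Finset.sum_sub_distrib]
      have e1 : ∑ i ∈ Finset.Icc (t + 1) s, gf p i = Gf p (s + 1) - Gf p (t + 1) := by
        have := tele (Gf p) s (t + 1) (by omega)
        simpa only [gf] using this
      have e2 : ∑ i ∈ Finset.Icc (t + 1) s, gf p (i - t)
          = Gf p (s - t + 1) - Gf p 1 := by
        rw [reindex2 (gf p) t s]
        have := tele (Gf p) (s - t) 1 (by omega)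
        simpa only [gf] using this
      rw [e1, e2]
    calc Gf p (s + 1) - Gf p (t + 1) - (Gf p (s - t + 1) - Gf p 1)
        = ∑ i ∈ Finset.Icc (t + 1) s, (gf p i - gf p (i - t)) := houter.symm
      _ ≤ ∑ i ∈ Finset.Icc (t + 1) s, ∑ j ∈ Finset.Icc 1 t, ((i - j : ℕ) : ℝ) ^ χ :=
          Finset.sum_le_sum hinner
  -- comparison of brackets
  have stepF : Gf p s - Gf p (s - t) - Gf p (t + 1) + Gf p 1
      ≤ Gf p (s + 1) - Gf p (t + 1) - (Gf p (s - t + 1) - Gf p 1) := by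
    have h1 : gf p (s - t) ≤ gf p s := hgmono (s - t) s (by omega) (by omega)
    simp only [gf] at h1
    linarith
  -- final assembly
  have hmain : J2 * ∑ i ∈ Finset.Icc (t + 1) s, ∑ j ∈ Finset.Icc 1 t,
        ((i - j : ℕ) : ℝ) ^ χ
      ≤ J2 * (Gf p s - Gf p (s - t) - Gf p (t + 1) + Gf p 1) :=
    mul_le_mul_of_nonpos_left (le_trans stepF stepE) hJ2.le
  have hfinal : J2 * (Gf p s - Gf p (s - t) - Gf p (t + 1) + Gf p 1)
      = (J2 / (p * (p - 1))) *
        ((s : ℝ) ^ p - ((s : ℝ) - (t : ℝ)) ^ p - (((t : ℝ) + 1) ^ p - 1)) := by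
    have hst : ((s - t : ℕ) : ℝ) = (s : ℝ) - (t : ℝ) := by
      push_cast [Nat.cast_sub hts.le]; ring
    have ht1' : ((t + 1 : ℕ) : ℝ) = (t : ℝ) + 1 := by push_cast; ring
    simp only [Gf, hst, ht1', Nat.cast_one, Real.one_rpow]
    field_simp
    ring_nf
  calc Cst r s t
      = ∑ i ∈ Finset.Icc (t + 1) s, ∑ j ∈ Finset.Icc 1 t, r (((i - j : ℕ) : ℤ)) := stepA
    _ ≤ ∑ i ∈ Finset.Icc (t + 1) s, ∑ j ∈ Finset.Icc 1 t,
          (hf (i - j) + J2 * ((i - j : ℕ) : ℝ) ^ χ) := stepB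
    _ = (∑ i ∈ Finset.Icc (t + 1) s, ∑ j ∈ Finset.Icc 1 t, hf (i - j))
        + J2 * ∑ i ∈ Finset.Icc (t + 1) s, ∑ j ∈ Finset.Icc 1 t,
            ((i - j : ℕ) : ℝ) ^ χ := stepC
    _ ≤ (T0 : ℝ) * Msum + J2 * (Gf p s - Gf p (s - t) - Gf p (t + 1) + Gf p 1) :=
        add_le_add stepD hmain
    _ = (T0 : ℝ) * Msum + (J2 / (p * (p - 1))) *
          ((s : ℝ) ^ p - ((s : ℝ) - (t : ℝ)) ^ p - (((t : ℝ) + 1) ^ p - 1)) := by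
        rw [hfinal]
    _ = (T0 : ℝ) * Msum + (J2 / (2 * H * (2 * H - 1))) *
          ((s : ℝ) ^ p - ((s : ℝ) - (t : ℝ)) ^ p - (((t : ℝ) + 1) ^ p - 1)) := by
        rw [hppred]
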